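/- Let G be a finite simple graph that does not contain two disjoint edges as an induced subgraph; that is, there are no four distinct vertices a, b, c, d such that ab and cd are edges of G while none of ac, ad, bc, bd is an edge of G. Then the chromatic number of G satisfies χ(G) ≤ ω(G)·(ω(G)+1)/2, where ω(G) is the clique number of G. -/

import Mathlib

open Finset

theorem chromatic_le_of_no_induced_two_disjoint_edges {V : Type*} [Fintype V]
    (G : SimpleGraph V)
    (h : ¬ ∃ a b c d : V, a ≠ b ∧ a ≠ c ∧ a ≠ d ∧ b ≠ c ∧ b ≠ d ∧ c ≠ d ∧
      G.Adj a b ∧ G.Adj c d ∧ ¬G.Adj a c ∧ ¬G.Adj a d ∧ ¬G.Adj b c ∧ ¬G.Adj b d) :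
    G.chromaticNumber ≤ (G.cliqueNum * (G.cliqueNum + 1) / 2 : ℕ) := by
  classical
  letI : LinearOrder V := LinearOrder.lift' (Fintype.equivFin V) (Fintype.equivFin V).injective
  obtain ⟨s, hs⟩ := G.exists_isNClique_cliqueNum
  -- T v : the non-neighbors of v inside the maximum clique s (v itself counts if v ∈ s)
  set T : V → Finset V := fun v => s.filter (fun w => ¬ G.Adj v w) with hT
  have hTmem : ∀ {v w : V}, w ∈ T v → w ∈ s ∧ ¬ G.Adj v w := by
    intro v w hw; simpa [hT] using hw
  have hTmem' : ∀ {v w : V}, w ∈ s → ¬ G.Adj v w → w ∈ T v := by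
    intro v w h1 h2; simp [hT, h1, h2]
  have hTne : ∀ v, (T v).Nonempty := by
    intro v
    by_cases hv : v ∈ s
    · exact ⟨v, hTmem' hv (G.irrefl)⟩
    · by_contra hne
      rw [Finset.not_nonempty_iff_eq_empty, Finset.filter_eq_empty_iff] at hne
      have hadj : ∀ w ∈ s, G.Adj v w := by
        intro w hw; have := hne hw; simpa using this
      have hclique : G.IsClique (insert v s : Finset V) := by
        intro x hx y hy hxy
        simp only [Finset.coe_insert, Set.mem_insert_iff, Finset.mem_coe] at hx hy
        rcases hx with rfl | hx
        · rcases hy with rfl | hy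
          · exact absurd rfl hxy
          · exact hadj y hy
        · rcases hy with rfl | hy
          · exact (hadj x hx).symm
          · exact hs.isClique hx hy hxy
      have hle : (insert v s).card ≤ G.cliqueNum := hclique.card_le_cliqueNum
      rw [Finset.card_insert_of_notMem hv, hs.card_eq] at hle
      omega
  -- if v ∈ s then T v = {v}
  have hTsing : ∀ v ∈ s, T v = {v} := by
    intro v hv
    ext w
    simp only [Finset.mem_singleton, hT, Finset.mem_filter]
    constructor
    · rintro ⟨hws, hnadj⟩
      by_contra hne
      exact hnadj ((hs.isClique hv hws (Ne.symm hne)).symm).symm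
    · rintro rfl; exact ⟨hv, G.irrefl⟩
  set a : V → V := fun v => (T v).min' (hTne v) with ha
  set b : V → V := fun v =>
    if hx : ((T v).erase (a v)).Nonempty then ((T v).erase (a v)).min' hx else a v with hb
  have haT : ∀ v, a v ∈ T v := fun v => (T v).min'_mem (hTne v)
  have hbT : ∀ v, b v ∈ T v := by
    intro v
    by_cases hx : ((T v).erase (a v)).Nonempty
    · have hbv : b v = ((T v).erase (a v)).min' hx := by simp [hb, hx]
      rw [hbv]; exact Finset.mem_of_mem_erase (Finset.min'_mem _ hx)
    · have hbv : b v = a v := by simp [hb, hx]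
      rw [hbv]; exact haT v
  -- if a v = b v then T v = {a v}
  have hdiag : ∀ v, a v = b v → T v = {a v} := by
    intro v hv
    by_cases hx : ((T v).erase (a v)).Nonempty
    · have hbv : b v = ((T v).erase (a v)).min' hx := by simp [hb, hx]
      rw [hbv] at hv
      exact absurd hv.symm (Finset.ne_of_mem_erase (Finset.min'_mem _ hx))
    · rw [Finset.not_nonempty_iff_eq_empty, Finset.erase_eq_empty_iff] at hx
      rcases hx with hx | hx
      · exact absurd (hx ▸ haT v) (Finset.notMem_empty _)
      · exact hx
  -- if a v ≠ b v then v ∉ s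
  have hoff : ∀ v, a v ≠ b v → v ∉ s := by
    intro v hne hv
    have h1 := haT v
    have h2 := hbT v
    rw [hTsing v hv, Finset.mem_singleton] at h1 h2
    exact hne (h1.trans h2.symm)
  -- diagonal case: adjacent u v with T u = T v = {x} is impossible
  have hdiagcase : ∀ u v x : V, G.Adj u v → T u = {x} → T v = {x} → False := by
    intro u v x huv hTu hTv
    have hxu : x ∈ T u := hTu ▸ Finset.mem_singleton_self x
    have hxv : x ∈ T v := hTv ▸ Finset.mem_singleton_self x
    have hxs : x ∈ s := (hTmem hxu).1
    have hux : ¬ G.Adj u x := (hTmem hxu).2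
    have hvx : ¬ G.Adj v x := (hTmem hxv).2
    have huX : u ≠ x := by rintro rfl; exact hvx huv.symm
    have hvX : v ≠ x := by rintro rfl; exact hux huv
    have hus : u ∉ s := by
      intro hus
      exact huX (Finset.singleton_inj.mp ((hTsing u hus).symm.trans hTu))
    have hvs : v ∉ s := by
      intro hvs
      exact hvX (Finset.singleton_inj.mp ((hTsing v hvs).symm.trans hTv))
    have hadju : ∀ w ∈ s, w ≠ x → G.Adj u w := by
      intro w hw hwx
      by_contra hn
      exact hwx (by simpa [hTu] using hTmem' hw hn)
    have hadjv : ∀ w ∈ s, w ≠ x → G.Adj v w := by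
      intro w hw hwx
      by_contra hn
      exact hwx (by simpa [hTv] using hTmem' hw hn)
    have hclique : G.IsClique (insert u (insert v (s.erase x)) : Finset V) := by
      intro p hp q hq hpq
      simp only [Finset.coe_insert, Set.mem_insert_iff, Finset.mem_coe,
        Finset.mem_erase] at hp hq
      rcases hp with rfl | rfl | ⟨hpx, hps⟩
      · rcases hq with rfl | rfl | ⟨hqx, hqs⟩
        · exact absurd rfl hpq
        · exact huv
        · exact hadju q hqs hqx
      · rcases hq with rfl | rfl | ⟨hqx, hqs⟩
        · exact huv.symm
        · exact absurd rfl hpq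
        · exact hadjv q hqs hqx
      · rcases hq with rfl | rfl | ⟨hqx, hqs⟩
        · exact (hadju p hps hpx).symm
        · exact (hadjv p hps hpx).symm
        · exact hs.isClique hps hqs hpq
    have hle : (insert u (insert v (s.erase x))).card ≤ G.cliqueNum :=
      hclique.card_le_cliqueNum
    have hcard1 : 1 ≤ s.card := Finset.card_pos.mpr ⟨x, hxs⟩
    rw [Finset.card_insert_of_notMem (by
        simp only [Finset.mem_insert, Finset.mem_erase]
        push_neg
        exact ⟨huv.ne, fun _ => hus⟩),
      Finset.card_insert_of_notMem (by
        simp only [Finset.mem_erase]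
        exact fun hc => hvs hc.2),
      Finset.card_erase_of_mem hxs, hs.card_eq] at hle
    omega
  -- the coloring
  have hcol : G.Colorable (Fintype.card (Sym2 {x // x ∈ s})) := by
    refine (SimpleGraph.Coloring.mk
      (fun v => Sym2.mk ⟨a v, (hTmem (haT v)).1⟩ ⟨b v, (hTmem (hbT v)).1⟩) ?_).colorable
    intro u v huv hc
    rw [Sym2.eq_iff] at hc
    have hcc : (a u = a v ∧ b u = b v) ∨ (a u = b v ∧ b u = a v) := by
      rcases hc with ⟨h1, h2⟩ | ⟨h1, h2⟩
      · exact Or.inl ⟨congrArg Subtype.val h1, congrArg Subtype.val h2⟩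
      · exact Or.inr ⟨congrArg Subtype.val h1, congrArg Subtype.val h2⟩
    by_cases hdu : a u = b u
    · -- diagonal colors
      have hTu : T u = {a u} := hdiag u hdu
      have hTv : T v = {a v} := by
        rcases hcc with ⟨h1, h2⟩ | ⟨h1, h2⟩
        · exact hdiag v (by rw [← h1, ← h2]; exact hdu)
        · exact hdiag v (by rw [← h2, ← h1]; exact hdu.symm)
      have hav : a v = a u := by
        rcases hcc with ⟨h1, _⟩ | ⟨_, h2⟩
        · exact h1.symm
        · exact h2.symm.trans hdu.symm
      exact hdiagcase u v (a u) huv hTu (hav ▸ hTv)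
    · -- off-diagonal colors
      have hdv : a v ≠ b v := by
        rcases hcc with ⟨h1, h2⟩ | ⟨h1, h2⟩
        · rw [← h1, ← h2]; exact hdu
        · rw [← h2, ← h1]; exact fun he => hdu he.symm
      have hus : u ∉ s := hoff u hdu
      have hvs : v ∉ s := hoff v hdv
      have haus : a u ∈ s := (hTmem (haT u)).1
      have hbus : b u ∈ s := (hTmem (hbT u)).1
      have hnva : ¬ G.Adj v (a u) := by
        rcases hcc with ⟨h1, _⟩ | ⟨h1, _⟩
        · rw [h1]; exact (hTmem (haT v)).2
        · rw [h1]; exact (hTmem (hbT v)).2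
      have hnvb : ¬ G.Adj v (b u) := by
        rcases hcc with ⟨_, h2⟩ | ⟨_, h2⟩
        · rw [h2]; exact (hTmem (hbT v)).2
        · rw [h2]; exact (hTmem (haT v)).2
      refine h ⟨u, v, a u, b u, huv.ne, ?_, ?_, ?_, ?_, hdu, huv,
        hs.isClique haus hbus hdu, (hTmem (haT u)).2, (hTmem (hbT u)).2, hnva, hnvb⟩
      · intro he; exact hus (by rw [he]; exact haus)
      · intro he; exact hus (by rw [he]; exact hbus)
      · intro he; exact hvs (by rw [he]; exact haus)
      · intro he; exact hvs (by rw [he]; exact hbus)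
  have hcard : Fintype.card (Sym2 {x // x ∈ s}) = G.cliqueNum * (G.cliqueNum + 1) / 2 := by
    rw [Sym2.card, Fintype.card_coe, hs.card_eq, Nat.choose_two_right]
    simp [Nat.mul_comm]
  rw [hcard] at hcol
  exact hcol.chromaticNumber_le
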